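/- Let q be a prime power, s a positive integer coprime to q, m = ord_s(q) the multiplicative order of q modulo s, and β ∈ F_{q^m} a primitive s-th root of unity. Then there exists γ ∈ F_{q^m} \ {0} such that the number of indices i ∈ {0, 1, …, s−1} with Tr_{F_{q^m}/F_q}(γβ^i) = 0 is at least s·(q^{m−1}−1)/(q^m−1). Consequently, the irreducible cyclic code V = {(Tr_{F_{q^m}/F_q}(γ), Tr_{F_{q^m}/F_q}(γβ), …, Tr_{F_{q^m}/F_q}(γβ^{s−1})) : γ ∈ F_{q^m}} ⊆ F_q^s has minimum distance d ≤ s·(1 − (q^{m−1}−1)/(q^m−1)). -/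

import Mathlib

open scoped BigOperators

namespace LRC

/-- Hamming weight of a vector. -/
noncomputable def hwt {n : ℕ} {F : Type*} [Zero F] (c : Fin n → F) : ℕ :=
  Nat.card {i : Fin n // c i ≠ 0}

/-- A linear code is cyclic if it is closed under the cyclic shift of coordinates. -/
def IsCyclicCode {n : ℕ} [NeZero n] {F : Type*} [Field F] (C : Submodule F (Fin n → F)) : Prop :=
  ∀ c ∈ C, (fun i : Fin n => c (i - 1)) ∈ C

/-- `A` is a recovery set for coordinate `i` of the code `C`. -/
def IsRecoverySet {n : ℕ} {F : Type*} [Field F] (C : Submodule F (Fin n → F)) (i : Fin n)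
    (A : Finset (Fin n)) : Prop :=
  i ∉ A ∧ ∃ φ : ((j : A) → F) → F, ∀ c ∈ C, c i = φ (fun j => c j)

/-- The code `C` has locality `r`. -/
def HasLocality {n : ℕ} {F : Type*} [Field F] (C : Submodule F (Fin n → F)) (r : ℕ) : Prop :=
  ∀ i : Fin n, ∃ A : Finset (Fin n), A.card ≤ r ∧ IsRecoverySet C i A

/-- Complete defining set of zeros of a cyclic code (locator field = symbol field). -/
def definingSet {n : ℕ} {F : Type*} [Field F] (C : Submodule F (Fin n → F)) : Set F :=
  {β | β ^ n = 1 ∧ ∀ c ∈ C, ∑ j : Fin n, c j * β ^ (j : ℕ) = 0}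

/-- Complete defining set of zeros of a cyclic code in an extension (locator) field `K`. -/
def definingSetExt (n : ℕ) {F K : Type*} [Field F] [Field K] [Algebra F K]
    (C : Submodule F (Fin n → F)) : Set K :=
  {β | β ^ n = 1 ∧ ∀ c ∈ C, ∑ j : Fin n, algebraMap F K (c j) * β ^ (j : ℕ) = 0}

/-- The cyclic code with a given set of zeros. -/
def codeOfZeros (n : ℕ) {F : Type*} [Field F] (Z : Set F) : Submodule F (Fin n → F) where
  carrier := {c | ∀ β ∈ Z, ∑ j : Fin n, c j * β ^ (j : ℕ) = 0}
  add_mem' := by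
    intro a b ha hb β hβ
    have h1 := ha β hβ
    have h2 := hb β hβ
    calc ∑ j : Fin n, (a + b) j * β ^ (j : ℕ)
        = (∑ j : Fin n, a j * β ^ (j : ℕ)) + ∑ j : Fin n, b j * β ^ (j : ℕ) := by
          rw [← Finset.sum_add_distrib]
          exact Finset.sum_congr rfl (by intro j _; simp [add_mul])
      _ = 0 := by rw [h1, h2, add_zero]
  zero_mem' := by intro β hβ; simp
  smul_mem' := by
    intro t a ha β hβ
    have h1 := ha β hβ
    calc ∑ j : Fin n, (t • a) j * β ^ (j : ℕ)
        = t * ∑ j : Fin n, a j * β ^ (j : ℕ) := by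
          rw [Finset.mul_sum]
          exact Finset.sum_congr rfl (by intro j _; simp [mul_assoc])
      _ = 0 := by rw [h1, mul_zero]

/-- Minimum distance: least Hamming weight of a nonzero codeword. -/
noncomputable def minDist {n : ℕ} {F : Type*} [Field F] (C : Submodule F (Fin n → F)) : ℕ :=
  sInf {w | ∃ c ∈ C, c ≠ 0 ∧ hwt c = w}

/-- The dual code under the standard bilinear form. -/
def dualCode {n : ℕ} {F : Type*} [Field F] (C : Submodule F (Fin n → F)) :
    Submodule F (Fin n → F) where
  carrier := {y | ∀ c ∈ C, ∑ i : Fin n, c i * y i = 0}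
  add_mem' := by
    intro a b ha hb c hc
    have h1 := ha c hc
    have h2 := hb c hc
    calc ∑ i : Fin n, c i * (a + b) i
        = (∑ i : Fin n, c i * a i) + ∑ i : Fin n, c i * b i := by
          rw [← Finset.sum_add_distrib]
          exact Finset.sum_congr rfl (by intro j _; simp [mul_add])
      _ = 0 := by rw [h1, h2, add_zero]
  zero_mem' := by intro c hc; simp
  smul_mem' := by
    intro t a ha c hc
    have h1 := ha c hc
    calc ∑ i : Fin n, c i * (t • a) i
        = t * ∑ i : Fin n, c i * a i := by
          rw [Finset.mul_sum]
          exact Finset.sum_congr rfl (by intro j _; simp [mul_assoc]; ring)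
      _ = 0 := by rw [h1, mul_zero]



section AuxLRC
open Finset
open scoped Classical IntermediateField

variable {F L : Type*} [Field F] [Fintype F] [Field L] [Fintype L] [Algebra F L]

lemma traceker_card (q m : ℕ) (hq : Fintype.card F = q) (hm : Module.finrank F L = m) :
    (univ.filter fun y : L => Algebra.trace F L y = 0).card = q ^ (m - 1) := by
  set T : L →ₗ[F] F := Algebra.trace F L with hT
  have hsurj : Function.Surjective T := Algebra.trace_surjective F L
  have hrange : LinearMap.range T = ⊤ := LinearMap.range_eq_top.mpr hsurj
  have hrk : Module.finrank F (LinearMap.range T) + Module.finrank F (LinearMap.ker T)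
      = Module.finrank F L := LinearMap.finrank_range_add_finrank_ker T
  have h1 : Module.finrank F (LinearMap.range T) = 1 := by
    rw [hrange]; simp
  have hmpos : 0 < m := by
    rw [← hm]; exact Module.finrank_pos
  have hker : Module.finrank F (LinearMap.ker T) = m - 1 := by omega
  have hcard : Fintype.card (LinearMap.ker T) = q ^ (m - 1) := by
    rw [Module.card_eq_pow_finrank (K := F), hq, hker]
  rw [← hcard, ← Fintype.card_subtype]
  exact (Fintype.card_congr (Equiv.subtypeEquivRight fun x => (LinearMap.mem_ker (f := T)))).symm

lemma tracemul_card (q m : ℕ) (hq : Fintype.card F = q) (hm : Module.finrank F L = m)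
    {x : L} (hx : x ≠ 0) :
    (univ.filter fun γ : L => Algebra.trace F L (γ * x) = 0).card = q ^ (m - 1) := by
  rw [← traceker_card q m hq hm]
  apply Finset.card_bij (fun γ _ => γ * x)
  · intro γ hγ; simp only [mem_filter, mem_univ, true_and] at *; exact hγ
  · intro a _ b _ h; exact mul_right_cancel₀ hx h
  · intro y hy
    refine ⟨y * x⁻¹, ?_, by field_simp⟩
    simp only [mem_filter, mem_univ, true_and] at *
    rwa [mul_assoc, inv_mul_cancel₀ hx, mul_one]


lemma adjoin_beta_top (q s m : ℕ) (hq : Fintype.card F = q) (hs : 0 < s)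
    (hm : Module.finrank F L = m)
    (hm2 : ∀ k : ℕ, 0 < k → s ∣ q ^ k - 1 → m ≤ k)
    (β : L) (hβ : orderOf β = s) : ∀ x : L, x ∈ Algebra.adjoin F {β} := by
  have hβ0 : β ≠ 0 := by
    intro h
    have h1 := pow_orderOf_eq_one β
    rw [hβ] at h1
    rw [h, zero_pow hs.ne'] at h1
    exact zero_ne_one h1
  set E : IntermediateField F L := F⟮β⟯ with hE
  haveI : Fintype E := Fintype.ofFinite E
  set k := Module.finrank F E with hk
  have hcardE : Fintype.card E = q ^ k := by rw [Module.card_eq_pow_finrank (K := F), hq]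
  set b : E := IntermediateField.AdjoinSimple.gen F β with hb
  have hbval : (b : L) = β := rfl
  have horder : orderOf b = s := by
    rw [← hβ]
    exact (orderOf_injective (E.val : E →+* L).toMonoidHom
      (fun a c h => Subtype.ext h) b).symm
  have hb0 : b ≠ 0 := fun h => hβ0 (by rw [← hbval, h]; rfl)
  set u : Eˣ := Units.mk0 b hb0 with hu
  have hou : orderOf u = s := by rw [← horder, ← orderOf_units]; rfl
  have hdvd : s ∣ q ^ k - 1 := by
    rw [← hou, ← hcardE, ← Fintype.card_units]
    exact orderOf_dvd_card
  have hkpos : 0 < k := Module.finrank_pos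
  have hmk : m ≤ k := hm2 k hkpos hdvd
  have hkm : k ≤ m := by
    rw [← hm]
    exact Submodule.finrank_le (Subalgebra.toSubmodule E.toSubalgebra)
  have hEtop : Subalgebra.toSubmodule E.toSubalgebra = ⊤ := by
    apply Submodule.eq_top_of_finrank_eq
    show Module.finrank F E = Module.finrank F L
    rw [hm]; omega
  intro x
  have hxE : x ∈ E := by
    have : x ∈ Subalgebra.toSubmodule E.toSubalgebra := by rw [hEtop]; trivial
    exact this
  have := IntermediateField.adjoin_simple_toSubalgebra_of_isAlgebraic
    (IsIntegral.of_finite F β).isAlgebraic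
  rw [← this]
  exact hxE

lemma exists_trace_ne (q s m : ℕ) (hq : Fintype.card F = q) (hs : 0 < s)
    (hm : Module.finrank F L = m)
    (hm2 : ∀ k : ℕ, 0 < k → s ∣ q ^ k - 1 → m ≤ k)
    (β : L) (hβ : orderOf β = s) {γ : L} (hγ : γ ≠ 0) :
    ∃ i : Fin s, Algebra.trace F L (γ * β ^ (i : ℕ)) ≠ 0 := by
  by_contra hcon
  push_neg at hcon
  have hall : ∀ n : ℕ, Algebra.trace F L (γ * β ^ n) = 0 := by
    intro n
    have h1 : β ^ n = β ^ (n % s) := by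
      conv_rhs => rw [← hβ]
      rw [pow_mod_orderOf]
    rw [h1]
    exact hcon ⟨n % s, Nat.mod_lt _ hs⟩
  have hallx : ∀ x : L, Algebra.trace F L (γ * x) = 0 := by
    intro x
    have hx := adjoin_beta_top q s m hq hs hm hm2 β hβ x
    rw [Algebra.adjoin_singleton_eq_range_aeval] at hx
    obtain ⟨p, rfl⟩ := hx
    show Algebra.trace F L (γ * Polynomial.aeval β p) = 0
    rw [Polynomial.aeval_eq_sum_range, Finset.mul_sum, map_sum]
    refine Finset.sum_eq_zero fun i _ => ?_
    rw [mul_smul_comm, map_smul, hall i, smul_zero]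
  obtain ⟨z, hz⟩ := Algebra.trace_surjective F L 1
  have := hallx (γ⁻¹ * z)
  rw [← mul_assoc, mul_inv_cancel₀ hγ, one_mul, hz] at this
  exact one_ne_zero this

lemma exists_gamma (q s m : ℕ) (hq : Fintype.card F = q) (hs : 0 < s)
    (hm : Module.finrank F L = m) (β : L) (hβ : orderOf β = s) (hβ0 : β ≠ 0) :
    ∃ γ : L, γ ≠ 0 ∧ s * (q ^ (m - 1) - 1) ≤
      (q ^ m - 1) * (univ.filter fun i : Fin s =>
        Algebra.trace F L (γ * β ^ (i : ℕ)) = 0).card := by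
  set D : Finset L := univ.filter fun γ : L => γ ≠ 0 with hD
  have hDe : D = univ.erase 0 := Finset.filter_ne' univ 0
  have hcardL : Fintype.card L = q ^ m := by rw [Module.card_eq_pow_finrank (K := F), hq, hm]
  have hDcard : D.card = q ^ m - 1 := by
    rw [hDe, Finset.card_erase_of_mem (mem_univ 0), card_univ, hcardL]
  set N : L → ℕ := fun γ => (univ.filter fun i : Fin s =>
    Algebra.trace F L (γ * β ^ (i : ℕ)) = 0).card with hN
  have hMi : ∀ i : Fin s,
      (D.filter fun γ => Algebra.trace F L (γ * β ^ (i : ℕ)) = 0).card = q ^ (m - 1) - 1 := by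
    intro i
    have h1 : (D.filter fun γ => Algebra.trace F L (γ * β ^ (i : ℕ)) = 0)
        = (univ.filter fun γ : L => Algebra.trace F L (γ * β ^ (i : ℕ)) = 0).erase 0 := by
      ext a
      simp only [hD, Finset.mem_filter, Finset.mem_erase, Finset.mem_univ, true_and]
    rw [h1, Finset.card_erase_of_mem (by simp),
      tracemul_card q m hq hm (pow_ne_zero _ hβ0)]
  have hsum : ∑ γ ∈ D, N γ = s * (q ^ (m - 1) - 1) := by
    calc ∑ γ ∈ D, N γ
        = ∑ γ ∈ D, ∑ i : Fin s,
            (if Algebra.trace F L (γ * β ^ (i : ℕ)) = 0 then 1 else 0) :=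
          Finset.sum_congr rfl fun γ _ => Finset.card_filter _ _
      _ = ∑ i : Fin s, ∑ γ ∈ D,
            (if Algebra.trace F L (γ * β ^ (i : ℕ)) = 0 then 1 else 0) := Finset.sum_comm
      _ = ∑ i : Fin s, (q ^ (m - 1) - 1) := by
          refine Finset.sum_congr rfl fun i _ => ?_
          rw [← Finset.card_filter]
          exact hMi i
      _ = s * (q ^ (m - 1) - 1) := by simp [Finset.card_univ, mul_comm]
  have hne : D.Nonempty := by
    obtain ⟨x, hx⟩ := exists_ne (0 : L)
    exact ⟨x, by simp [hD, hx]⟩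
  have hkey : ∃ γ ∈ D, s * (q ^ (m - 1) - 1) ≤ (q ^ m - 1) * N γ := by
    apply Finset.exists_le_of_sum_le hne
    rw [Finset.sum_const, smul_eq_mul, ← Finset.mul_sum, hsum, hDcard]
  obtain ⟨γ, hγD, hγ⟩ := hkey
  exact ⟨γ, by simpa [hD] using hγD, hγ⟩

end AuxLRC

/-- averaging bound on the minimum distance of an irreducible cyclic code. -/
theorem stmt6 {F L : Type*} [Field F] [Fintype F] [Field L] [Fintype L] [Algebra F L]
    (q s m : ℕ) (hq : Fintype.card F = q) (hs : 0 < s) (hsq : Nat.Coprime s q)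
    (hm : Module.finrank F L = m)
    -- `m = ord_s(q)`: the multiplicative order of `q` modulo `s`
    (hm1 : s ∣ q ^ m - 1) (hm2 : ∀ k : ℕ, 0 < k → s ∣ q ^ k - 1 → m ≤ k)
    (β : L) (hβ : orderOf β = s) :
    (∃ γ : L, γ ≠ 0 ∧
        ((s : ℝ) * ((q : ℝ) ^ (m - 1) - 1) / ((q : ℝ) ^ m - 1) ≤
          (Nat.card {i : Fin s // Algebra.trace F L (γ * β ^ (i : ℕ)) = 0} : ℝ))) ∧
      ((sInf {w | ∃ v ∈ Set.range (fun γ : L => fun i : Fin s =>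
            Algebra.trace F L (γ * β ^ (i : ℕ))), v ≠ 0 ∧ hwt v = w} : ℝ) ≤
        (s : ℝ) * (1 - ((q : ℝ) ^ (m - 1) - 1) / ((q : ℝ) ^ m - 1))) := by
  classical
  have hq2 : 2 ≤ q := hq ▸ Fintype.one_lt_card
  have hmpos : 0 < m := hm ▸ Module.finrank_pos
  have hβ0 : β ≠ 0 := by
    intro h
    have h1 := pow_orderOf_eq_one β
    rw [hβ] at h1
    rw [h, zero_pow hs.ne'] at h1
    exact zero_ne_one h1
  obtain ⟨γ, hγ0, hγ⟩ := exists_gamma q s m hq hs hm β hβ hβ0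
  set N : ℕ := (Finset.univ.filter fun i : Fin s =>
    Algebra.trace F L (γ * β ^ (i : ℕ)) = 0).card with hN
  have hNat : Nat.card {i : Fin s // Algebra.trace F L (γ * β ^ (i : ℕ)) = 0} = N := by
    rw [Nat.card_eq_fintype_card, Fintype.card_subtype]
  have h1q : (1:ℕ) ≤ q ^ (m - 1) := Nat.one_le_pow _ _ (by omega)
  have h2q : (1:ℕ) ≤ q ^ m := Nat.one_le_pow _ _ (by omega)
  have hcast : (s:ℝ) * ((q:ℝ) ^ (m-1) - 1) ≤ ((q:ℝ) ^ m - 1) * (N:ℝ) := by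
    have h3 := (Nat.cast_le (α := ℝ)).mpr hγ
    push_cast [Nat.cast_sub h1q, Nat.cast_sub h2q] at h3
    convert h3 using 2 <;> push_cast <;> ring
  have hq1m : (1:ℝ) < (q:ℝ) ^ m := by
    exact_mod_cast (Nat.one_lt_pow (by omega) (by omega) : 1 < q ^ m)
  have hden : (0:ℝ) < (q:ℝ) ^ m - 1 := by linarith
  have part1 : (s : ℝ) * ((q : ℝ) ^ (m - 1) - 1) / ((q : ℝ) ^ m - 1) ≤ (N : ℝ) := by
    rw [div_le_iff₀ hden]
    nlinarith [hcast]
  refine ⟨⟨γ, hγ0, by rw [hNat]; exact part1⟩, ?_⟩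
  obtain ⟨i0, hi0⟩ := exists_trace_ne q s m hq hs hm hm2 β hβ hγ0
  have hv0 : (fun i : Fin s => Algebra.trace F L (γ * β ^ (i : ℕ))) ≠ 0 := by
    intro h
    exact hi0 (congrFun h i0)
  have hNs : N ≤ s := by
    rw [hN]
    exact le_trans (Finset.card_filter_le _ _) (by simp)
  have hwtv : hwt (fun i : Fin s => Algebra.trace F L (γ * β ^ (i : ℕ))) = s - N := by
    rw [hwt, Nat.card_eq_fintype_card, Fintype.card_subtype]
    have hsplit := Finset.card_filter_add_card_filter_not
      (s := (Finset.univ : Finset (Fin s)))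
      (p := fun i : Fin s => Algebra.trace F L (γ * β ^ (i : ℕ)) = 0)
    simp only [Finset.card_univ, Fintype.card_fin, not_not, ne_eq] at hsplit ⊢
    omega
  set S : Set ℝ := {w | ∃ v ∈ Set.range (fun γ : L => fun i : Fin s =>
        Algebra.trace F L (γ * β ^ (i : ℕ))), v ≠ 0 ∧ (hwt v : ℝ) = w} with hS
  have hmem : ((hwt (fun i : Fin s => Algebra.trace F L (γ * β ^ (i : ℕ))) : ℕ) : ℝ) ∈ S :=
    ⟨_, ⟨γ, rfl⟩, hv0, rfl⟩
  have hbdd : BddBelow S := by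
    refine ⟨0, ?_⟩
    rintro w ⟨v', -, -, rfl⟩
    exact Nat.cast_nonneg _
  calc sInf S
      ≤ (hwt (fun i : Fin s => Algebra.trace F L (γ * β ^ (i : ℕ))) : ℝ) :=
        csInf_le hbdd hmem
    _ = (s : ℝ) - (N : ℝ) := by rw [hwtv, Nat.cast_sub hNs]
    _ ≤ (s : ℝ) * (1 - ((q : ℝ) ^ (m - 1) - 1) / ((q : ℝ) ^ m - 1)) := by
        have h4 : (s:ℝ) * (((q:ℝ) ^ (m - 1) - 1) / ((q:ℝ) ^ m - 1)) ≤ (N:ℝ) := by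
          rw [← mul_div_assoc, div_le_iff₀ hden]
          nlinarith [hcast]
        rw [mul_sub, mul_one]
        linarith [h4]

end LRC
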